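/- If p is a 0-maximal polynomial of degree n ≥ 2, then d(p) = |p|_0, i.e., the directed Hausdorff distance from the zero set of p to the zero set of p' equals the distance from the origin to the nearest critical point of p. -/

import Mathlib

open Polynomial

/-- `S(n,0)`: monic complex polynomials of degree `n` with all zeros in the closed unit disk
and vanishing at `0`. -/
def S0 (n : ℕ) : Set (Polynomial ℂ) :=
  {p | p.Monic ∧ p.natDegree = n ∧ (∀ z : ℂ, p.eval z = 0 → ‖z‖ ≤ 1) ∧
    p.eval 0 = 0}

/-- `|p|_0 = min {|w| : p'(w) = 0}`: the distance from the origin to the zero set of `p'`. -/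
noncomputable def pnorm0 (p : Polynomial ℂ) : ℝ :=
  sInf ((fun w : ℂ => ‖w‖) '' {w : ℂ | (Polynomial.derivative p).eval w = 0})

/-- `d(p) = max_{p(z)=0} min_{p'(w)=0} |z - w|`, the directed Hausdorff distance from the
zeros of `p` to the zeros of `p'`. -/
noncomputable def dfun (p : Polynomial ℂ) : ℝ :=
  sSup ((fun z => sInf ((fun w => ‖z - w‖) ''
      {w : ℂ | (Polynomial.derivative p).eval w = 0})) '' {z : ℂ | p.eval z = 0})

namespace Complex

/-- The complex modulus as an absolute value. -/
noncomputable def abs : AbsoluteValue ℂ ℝ := IsAbsoluteValue.toAbsoluteValue (norm : ℂ → ℝ)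

@[simp] lemma abs_eq_norm (z : ℂ) : abs z = ‖z‖ := rfl

lemma abs_apply (z : ℂ) : abs z = Real.sqrt (normSq z) := Complex.norm_def z

lemma abs_ofReal (r : ℝ) : abs (r : ℂ) = |r| := Complex.norm_real r

lemma abs_natCast (n : ℕ) : abs (n : ℂ) = n := Complex.norm_natCast n

lemma sq_abs (z : ℂ) : abs z ^ 2 = normSq z := Complex.sq_norm z

end Complex

noncomputable section
namespace ZeroMaxAux

/-- Polar derivative of `A` with respect to `ζ`, at formal degree `N`. -/
noncomputable def polder (N : ℕ) (ζ : ℂ) (A : Polynomial ℂ) : Polynomial ℂ :=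
  C (N : ℂ) * A + (C ζ - X) * derivative A

lemma coeff_polder (N : ℕ) (ζ : ℂ) (A : Polynomial ℂ) (k : ℕ) :
    (polder N ζ A).coeff k
      = ((N : ℂ) - k) * A.coeff k + ζ * (k + 1) * A.coeff (k + 1) := by
  unfold polder
  rw [coeff_add, coeff_C_mul, sub_mul, coeff_sub, coeff_C_mul]
  rcases k with _ | k
  · simp [coeff_derivative, mul_coeff_zero]
  · rw [coeff_X_mul, coeff_derivative, coeff_derivative]
    push_cast
    ring

/-- The (factorial-normalized) apolarity pairing. -/
noncomputable def pairF (N : ℕ) (A B : Polynomial ℂ) : ℂ :=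
  ∑ k ∈ Finset.range (N + 1),
    (-1) ^ k * (k.factorial : ℂ) * ((N - k).factorial : ℂ) * A.coeff k * B.coeff (N - k)

lemma pairF_sum {ι : Type*} (N : ℕ) (A : Polynomial ℂ) (s : Finset ι) (f : ι → Polynomial ℂ) :
    pairF N A (∑ i ∈ s, f i) = ∑ i ∈ s, pairF N A (f i) := by
  simp only [pairF, finset_sum_coeff, Finset.mul_sum]
  exact Finset.sum_comm

lemma pairF_sub (N : ℕ) (A B₁ B₂ : Polynomial ℂ) :
    pairF N A (B₁ - B₂) = pairF N A B₁ - pairF N A B₂ := by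
  simp only [pairF, coeff_sub, mul_sub, Finset.sum_sub_distrib]

lemma pairF_monomial (N m : ℕ) (hm : m ≤ N) (A : Polynomial ℂ) (b : ℂ) :
    pairF N A (monomial m b)
      = (-1) ^ (N - m) * ((N - m).factorial : ℂ) * (m.factorial : ℂ) * A.coeff (N - m) * b := by
  unfold pairF
  rw [Finset.sum_eq_single (N - m)]
  · rw [coeff_monomial]
    have h : N - (N - m) = m := by omega
    rw [h, if_pos rfl]
  · intro k hk hne
    rw [coeff_monomial, if_neg, mul_zero]
    simp only [Finset.mem_range] at hk
    omega
  · intro h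
    exfalso; apply h
    simp only [Finset.mem_range]; omega

lemma pair_step_mono (N m : ℕ) (hm : m < N) (ζ b : ℂ) (A : Polynomial ℂ) :
    pairF (N - 1) (polder N ζ A) (monomial m b) = pairF N A ((X - C ζ) * monomial m b) := by
  have hXm : (X - C ζ) * monomial m b = monomial (m + 1) b - monomial m (ζ * b) := by
    rw [sub_mul, X_mul_monomial, C_mul_monomial]
  rw [hXm, pairF_sub, pairF_monomial N (m+1) (by omega), pairF_monomial N m (by omega),
    pairF_monomial (N-1) m (by omega), coeff_polder]
  have hk : N - 1 - m = N - (m + 1) := by omega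
  set k := N - (m + 1) with hkdef
  have h1 : N - m = k + 1 := by omega
  have h2 : N - 1 - m = k := by omega
  have h3 : (N : ℂ) - (k : ℂ) = (m : ℂ) + 1 := by
    have : N = k + (m + 1) := by omega
    rw [this]; push_cast; ring
  rw [h2, h1, h3]
  clear_value k
  have hf1 : ((k + 1).factorial : ℂ) = (k + 1) * (k.factorial : ℂ) := by
    rw [Nat.factorial_succ]; push_cast; ring
  have hf2 : ((m + 1).factorial : ℂ) = (m + 1) * (m.factorial : ℂ) := by
    rw [Nat.factorial_succ]; push_cast; ring
  rw [hf1, hf2, pow_succ]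
  push_cast
  ring

lemma pair_step (N : ℕ) (ζ : ℂ) (A B₁ : Polynomial ℂ) (hB : B₁.natDegree < N) :
    pairF (N - 1) (polder N ζ A) B₁ = pairF N A ((X - C ζ) * B₁) := by
  conv_lhs => rw [B₁.as_sum_range' N hB]
  conv_rhs => rw [B₁.as_sum_range' N hB]
  rw [Finset.mul_sum, pairF_sum, pairF_sum]
  apply Finset.sum_congr rfl
  intro m hm
  exact pair_step_mono N m (Finset.mem_range.mp hm) ζ _ A


lemma abs_sub_le_abs_of_re {δ : ℝ} {s : ℂ} (hδ : 0 < δ) (hs : δ ≤ s.re) :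
    Complex.abs (((2 * δ : ℝ) : ℂ) - s) ≤ Complex.abs s := by
  have h1 : Complex.normSq (((2 * δ : ℝ) : ℂ) - s) ≤ Complex.normSq s := by
    simp only [Complex.normSq_apply, Complex.sub_re, Complex.sub_im, Complex.ofReal_re,
      Complex.ofReal_im]
    nlinarith
  rw [Complex.abs_apply, Complex.abs_apply]
  exact Real.sqrt_le_sqrt h1

lemma abs_lt_abs_of_re {δ : ℝ} {t : ℂ} (hδ : 0 < δ) (ht : t.re < δ) :
    Complex.abs t < Complex.abs (((2 * δ : ℝ) : ℂ) - t) := by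
  have h1 : Complex.normSq t < Complex.normSq (((2 * δ : ℝ) : ℂ) - t) := by
    simp only [Complex.normSq_apply, Complex.sub_re, Complex.sub_im, Complex.ofReal_re,
      Complex.ofReal_im]
    nlinarith
  rw [Complex.abs_apply, Complex.abs_apply]
  exact Real.sqrt_lt_sqrt (Complex.normSq_nonneg _) h1

lemma inv_disk {δ : ℝ} {s : ℂ} (hδ : 0 < δ) (hs : δ ≤ s.re) :
    Complex.abs (s⁻¹ - (((2 * δ : ℝ) : ℂ))⁻¹) ≤ (2 * δ)⁻¹ := by
  have hs0 : s ≠ 0 := by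
    intro h; rw [h] at hs; simp at hs; linarith
  have hd0 : ((2 * δ : ℝ) : ℂ) ≠ 0 := by
    simp only [ne_eq, Complex.ofReal_eq_zero]; positivity
  have key : s⁻¹ - (((2 * δ : ℝ) : ℂ))⁻¹
      = (((2 * δ : ℝ) : ℂ))⁻¹ * ((((2 * δ : ℝ) : ℂ)) - s) * s⁻¹ := by
    have h1 : (((2 * δ : ℝ) : ℂ))⁻¹ * ((((2 * δ : ℝ) : ℂ)) - s) * s⁻¹
        = ((((2 * δ : ℝ) : ℂ))⁻¹ * (((2 * δ : ℝ) : ℂ))) * s⁻¹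
          - (((2 * δ : ℝ) : ℂ))⁻¹ * (s * s⁻¹) := by ring
    rw [h1, inv_mul_cancel₀ hd0, mul_inv_cancel₀ hs0, one_mul, mul_one]
  rw [key]
  rw [map_mul, map_mul, map_inv₀, map_inv₀]
  have habs : Complex.abs ((2 * δ : ℝ) : ℂ) = 2 * δ := by
    rw [Complex.abs_ofReal]; rw [abs_of_pos]; positivity
  rw [habs]
  have h2 := abs_sub_le_abs_of_re hδ hs
  have hspos : 0 < Complex.abs s := by
    rw [AbsoluteValue.pos_iff]; exact hs0
  rw [mul_assoc]
  have : Complex.abs (((2 * δ : ℝ) : ℂ) - s) * (Complex.abs s)⁻¹ ≤ 1 := by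
    rw [mul_inv_le_iff₀ hspos, one_mul]; exact h2
  calc (2 * δ)⁻¹ * (Complex.abs (((2 * δ : ℝ) : ℂ) - s) * (Complex.abs s)⁻¹)
      ≤ (2 * δ)⁻¹ * 1 := by
        apply mul_le_mul_of_nonneg_left this (by positivity)
    _ = (2 * δ)⁻¹ := mul_one _

lemma sum_inv_bound {c δ : ℝ} (hδ : 0 < δ) {z : ℂ} (hz : z.re = c + δ)
    (M : Multiset ℂ) (h : ∀ w ∈ M, w.re ≤ c) :
    Complex.abs ((M.map fun w => (z - w)⁻¹).sum - (M.card : ℂ) * (((2 * δ : ℝ) : ℂ))⁻¹)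
      ≤ (M.card : ℝ) * (2 * δ)⁻¹ := by
  induction M using Multiset.induction with
  | empty => simp
  | cons a M ih =>
    have ha : δ ≤ (z - a).re := by
      have := h a (Multiset.mem_cons_self a M)
      simp only [Complex.sub_re]; linarith
    have ih' := ih (fun w hw => h w (Multiset.mem_cons_of_mem hw))
    simp only [Multiset.map_cons, Multiset.sum_cons, Multiset.card_cons]
    have hrw : (z - a)⁻¹ + (M.map fun w => (z - w)⁻¹).sum
        - ((Multiset.card M + 1 : ℕ) : ℂ) * (((2 * δ : ℝ) : ℂ))⁻¹
        = ((z - a)⁻¹ - (((2 * δ : ℝ) : ℂ))⁻¹)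
          + ((M.map fun w => (z - w)⁻¹).sum - (M.card : ℂ) * (((2 * δ : ℝ) : ℂ))⁻¹) := by
      push_cast; ring
    rw [hrw]
    calc Complex.abs _ ≤ Complex.abs ((z - a)⁻¹ - (((2 * δ : ℝ) : ℂ))⁻¹)
          + Complex.abs ((M.map fun w => (z - w)⁻¹).sum
            - (M.card : ℂ) * (((2 * δ : ℝ) : ℂ))⁻¹) := map_add_le_add _ _ _
      _ ≤ (2 * δ)⁻¹ + (M.card : ℝ) * (2 * δ)⁻¹ := add_le_add (inv_disk hδ ha) ih'
      _ = ((Multiset.card M + 1 : ℕ) : ℝ) * (2 * δ)⁻¹ := by push_cast; ring_nf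

lemma eval_derivative_prod (M : Multiset ℂ) (l z : ℂ) (hz : ∀ w ∈ M, z ≠ w) :
    eval z (derivative (C l * (M.map fun w => X - C w).prod))
      = eval z (C l * (M.map fun w => X - C w).prod) * (M.map fun w => (z - w)⁻¹).sum := by
  induction M using Multiset.induction with
  | empty => simp
  | cons a M ih =>
    have hz' : ∀ w ∈ M, z ≠ w := fun w hw => hz w (Multiset.mem_cons_of_mem hw)
    have hza : z - a ≠ 0 := sub_ne_zero.mpr (hz a (Multiset.mem_cons_self a M))
    have hre : C l * ((a ::ₘ M).map fun w => X - C w).prod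
        = (X - C a) * (C l * (M.map fun w => X - C w).prod) := by
      rw [Multiset.map_cons, Multiset.prod_cons]; ring
    rw [hre, derivative_mul]
    have hd : derivative (X - C a) = (1 : Polynomial ℂ) := by simp
    rw [hd, one_mul]
    simp only [eval_add, eval_mul, eval_sub, eval_X, eval_C, ih hz', Multiset.map_cons,
      Multiset.sum_cons]
    set E := eval z (Multiset.map (fun w => X - C w) M).prod with hE
    set S := (Multiset.map (fun w => (z - w)⁻¹) M).sum with hS
    field_simp

lemma laguerre {A : Polynomial ℂ} {c : ℝ} (hA : A ≠ 0) (hd : 1 ≤ A.natDegree)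
    (hroots : ∀ w ∈ A.roots, w.re ≤ c) {ζ z : ℂ} (hζ : c < ζ.re) (hz : c < z.re) :
    eval z (polder A.natDegree ζ A) ≠ 0 := by
  set N := A.natDegree with hN
  have hsplit : A = C A.leadingCoeff * (A.roots.map fun w => X - C w).prod :=
    (IsAlgClosed.splits A).eq_prod_roots
  have hcard : Multiset.card A.roots = N := splits_iff_card_roots.mp (IsAlgClosed.splits A)
  have hzW : ∀ w ∈ A.roots, z ≠ w := by
    intro w hw h
    have := hroots w hw
    rw [← h] at this
    linarith
  have hAz : eval z A ≠ 0 := by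
    intro h
    have hmem : z ∈ A.roots := (mem_roots hA).mpr h
    exact hzW z hmem rfl
  intro h0
  simp only [polder, eval_add, eval_mul, eval_sub, eval_C, eval_X] at h0
  have hder : eval z (derivative A) = eval z A * (A.roots.map fun w => (z - w)⁻¹).sum := by
    have h := eval_derivative_prod A.roots A.leadingCoeff z hzW
    rw [← hsplit] at h
    exact h
  rw [hder] at h0
  set S := (A.roots.map fun w => (z - w)⁻¹).sum with hS
  have hNe : (N : ℂ) * eval z A = ((z - ζ) * S) * eval z A := by linear_combination h0
  have hNS : ((z - ζ) * S) = (N : ℂ) := (mul_right_cancel₀ hAz hNe).symm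
  set δ := z.re - c with hδdef
  have hδ : 0 < δ := by simp [hδdef]; linarith
  have hzre : z.re = c + δ := by rw [hδdef]; ring
  have hbound := sum_inv_bound hδ hzre A.roots hroots
  rw [hcard] at hbound
  set t := z - ζ with ht
  have htre : t.re < δ := by
    rw [ht, hδdef]
    simp only [Complex.sub_re]
    linarith
  have hd0 : ((2 * δ : ℝ) : ℂ) ≠ 0 := by
    simp only [ne_eq, Complex.ofReal_eq_zero]; positivity
  have hexp : t * (S - (N : ℂ) * (((2 * δ : ℝ) : ℂ))⁻¹)
      = (N : ℂ) * (((2 * δ : ℝ) : ℂ))⁻¹ * ((((2 * δ : ℝ) : ℂ)) - t) := by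
    have h1 : t * (S - (N : ℂ) * (((2 * δ : ℝ) : ℂ))⁻¹)
        = t * S - (N : ℂ) * (((2 * δ : ℝ) : ℂ))⁻¹ * t := by ring
    have h2 : (N : ℂ) * (((2 * δ : ℝ) : ℂ))⁻¹ * ((((2 * δ : ℝ) : ℂ)) - t)
        = (N : ℂ) * ((((2 * δ : ℝ) : ℂ))⁻¹ * (((2 * δ : ℝ) : ℂ)))
          - (N : ℂ) * (((2 * δ : ℝ) : ℂ))⁻¹ * t := by ring
    rw [h1, h2, inv_mul_cancel₀ hd0, mul_one, hNS]
  have hkey : Complex.abs (t * (S - (N : ℂ) * (((2 * δ : ℝ) : ℂ))⁻¹))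
      ≤ Complex.abs t * ((N : ℝ) * (2 * δ)⁻¹) := by
    rw [map_mul]
    exact mul_le_mul_of_nonneg_left hbound (AbsoluteValue.nonneg _ _)
  rw [hexp, map_mul, map_mul] at hkey
  have habsN : Complex.abs ((N : ℕ) : ℂ) = (N : ℝ) := by
    rw [Complex.abs_natCast]
  have habsd : Complex.abs ((2 * δ : ℝ) : ℂ) = 2 * δ := by
    rw [Complex.abs_ofReal, abs_of_pos]; positivity
  rw [map_inv₀, habsN, habsd] at hkey
  have hlt := abs_lt_abs_of_re hδ htre
  have hNpos : (0 : ℝ) < (N : ℝ) := by exact_mod_cast hd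
  have hipos : (0 : ℝ) < (2 * δ)⁻¹ := by positivity
  nlinarith [mul_lt_mul_of_pos_left hlt (mul_pos hNpos hipos)]
lemma polder_facts {A : Polynomial ℂ} {c : ℝ} {N : ℕ} (hA : A ≠ 0) (hAdeg : A.natDegree = N)
    (hN : 1 ≤ N) (hroots : ∀ w ∈ A.roots, w.re ≤ c) {ζ : ℂ} (hζ : c < ζ.re) :
    (polder N ζ A).coeff (N - 1) ≠ 0 ∧ (polder N ζ A).natDegree = N - 1 := by
  have hlc : A.leadingCoeff ≠ 0 := leadingCoeff_ne_zero.mpr hA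
  -- next coefficient identity
  set Am := A * C (A.leadingCoeff)⁻¹ with hAm
  have hm : Am.Monic := monic_mul_leadingCoeff_inv hA
  have hAmroots : Am.roots = A.roots := by
    rw [hAm, mul_comm]
    exact roots_C_mul A (inv_ne_zero hlc)
  have hAmdeg : Am.natDegree = N := by
    rw [hAm, natDegree_mul hA (fun h => (inv_ne_zero hlc) (by simpa using h)), natDegree_C,
      add_zero, hAdeg]
  have hnext := (IsAlgClosed.splits Am).nextCoeff_eq_neg_sum_roots_of_monic hm
  have hnext' : Am.nextCoeff = Am.coeff (N - 1) := by
    rw [nextCoeff_of_natDegree_pos (by omega : 0 < Am.natDegree), hAmdeg]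
  have hcoefAm : Am.coeff (N - 1) = A.coeff (N - 1) * (A.leadingCoeff)⁻¹ := by
    rw [hAm, coeff_mul_C]
  have hsum : A.coeff (N - 1) = -(A.leadingCoeff) * A.roots.sum := by
    have h1 : A.coeff (N - 1) * (A.leadingCoeff)⁻¹ = -A.roots.sum := by
      rw [← hcoefAm, ← hnext', hnext, hAmroots]
    field_simp at h1
    rw [h1]; ring
  -- the key coefficient
  have hcoeff : (polder N ζ A).coeff (N - 1)
      = A.leadingCoeff * ((N : ℂ) * ζ - A.roots.sum) := by
    rw [coeff_polder]
    have e1 : (N - 1) + 1 = N := by omega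
    have e2 : ((N - 1 : ℕ) : ℂ) = (N : ℂ) - 1 := by
      push_cast [Nat.cast_sub hN]; ring
    have e3 : A.coeff N = A.leadingCoeff := by rw [← hAdeg]; exact coeff_natDegree
    rw [e1, e2, hsum, e3]
    ring
  have hrepos : 0 < ((N : ℂ) * ζ - A.roots.sum).re := by
    have hre : ((N : ℂ) * ζ).re = (N : ℝ) * ζ.re := by
      simp [Complex.mul_re]
    have hsumre : (A.roots.sum).re = (A.roots.map Complex.re).sum := by
      simpa using map_multiset_sum Complex.reAddGroupHom A.roots
    have hcard : Multiset.card A.roots = N :=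
      hAdeg ▸ splits_iff_card_roots.mp (IsAlgClosed.splits A)
    have hb : (A.roots.map Complex.re).sum ≤ (N : ℝ) * c := by
      calc (A.roots.map Complex.re).sum ≤ (A.roots.map fun _ => c).sum :=
            Multiset.sum_map_le_sum_map _ _ hroots
        _ = (N : ℝ) * c := by
            rw [Multiset.map_const', Multiset.sum_replicate, hcard, nsmul_eq_mul]
    have hNc : (N : ℝ) * c < (N : ℝ) * ζ.re := by
      apply mul_lt_mul_of_pos_left hζ
      exact_mod_cast hN
    rw [Complex.sub_re, hre, hsumre]
    linarith
  have hne : (polder N ζ A).coeff (N - 1) ≠ 0 := by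
    rw [hcoeff]
    apply mul_ne_zero hlc
    intro h
    rw [h] at hrepos
    simp at hrepos
  refine ⟨hne, ?_⟩
  have hle : (polder N ζ A).natDegree ≤ N - 1 := by
    rw [natDegree_le_iff_coeff_eq_zero]
    intro m hm'
    rw [coeff_polder]
    have hm1 : A.coeff (m + 1) = 0 :=
      coeff_eq_zero_of_natDegree_lt (by omega)
    rcases eq_or_lt_of_le (show N ≤ m by omega) with h | h
    · have hz : ((N : ℂ) - (m : ℂ)) = 0 := by rw [← h]; ring
      rw [hm1, hz]; ring
    · rw [hm1, coeff_eq_zero_of_natDegree_lt (by omega : A.natDegree < m)]; ring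
  exact le_antisymm hle (le_natDegree_of_ne_zero hne)

lemma grace (c : ℝ) (N : ℕ) : ∀ (A B : Polynomial ℂ), A ≠ 0 → A.natDegree = N →
    (∀ w ∈ A.roots, w.re ≤ c) → B ≠ 0 → B.natDegree ≤ N →
    (∀ z ∈ B.roots, c < z.re) → pairF N A B ≠ 0 := by
  induction N using Nat.strong_induction_on with
  | _ N ih =>
  intro A B hA hAdeg hAroots hB hBdeg hBroots
  by_cases hB0 : B.natDegree = 0
  · have hb : B.coeff 0 ≠ 0 := by
      intro h
      apply hB
      rw [eq_C_of_natDegree_eq_zero hB0, h, map_zero]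
    have hAN : A.coeff N ≠ 0 := by
      rw [← hAdeg, coeff_natDegree]
      exact leadingCoeff_ne_zero.mpr hA
    unfold pairF
    rw [Finset.sum_eq_single N]
    · rw [Nat.sub_self]
      apply mul_ne_zero (mul_ne_zero (mul_ne_zero (mul_ne_zero _ _) _) hAN) hb
      · exact pow_ne_zero _ (neg_ne_zero.mpr one_ne_zero)
      · exact_mod_cast Nat.factorial_ne_zero N
      · exact_mod_cast Nat.factorial_ne_zero 0
    · intro k hk hne
      have hz : B.coeff (N - k) = 0 := coeff_eq_zero_of_natDegree_lt
        (by rw [hB0]; simp only [Finset.mem_range] at hk; omega)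
      rw [hz, mul_zero]
    · intro h
      exact absurd (Finset.self_mem_range_succ N) h
  · have hB1 : 1 ≤ B.natDegree := Nat.one_le_iff_ne_zero.mpr hB0
    have hN1 : 1 ≤ N := le_trans hB1 hBdeg
    have hBcard : Multiset.card B.roots = B.natDegree :=
      splits_iff_card_roots.mp (IsAlgClosed.splits B)
    have hBne : B.roots ≠ 0 := by
      intro h
      rw [h] at hBcard
      simp at hBcard
      omega
    obtain ⟨ζ, hζmem⟩ := Multiset.exists_mem_of_ne_zero hBne
    have hζre : c < ζ.re := hBroots ζ hζmem
    obtain ⟨B₁, hfac⟩ := dvd_iff_isRoot.mpr ((mem_roots hB).mp hζmem)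
    have hB₁ : B₁ ≠ 0 := by rintro rfl; rw [mul_zero] at hfac; exact hB hfac
    have hdegfac : B.natDegree = 1 + B₁.natDegree := by
      rw [hfac, natDegree_mul (X_sub_C_ne_zero ζ) hB₁, natDegree_X_sub_C]
    have hB₁deg : B₁.natDegree < N := by omega
    have hB₁roots : ∀ z ∈ B₁.roots, c < z.re := by
      intro z hzmem
      apply hBroots
      rw [mem_roots hB, hfac]
      have hz0 : eval z B₁ = 0 := (mem_roots hB₁).mp hzmem
      show eval z _ = 0
      rw [eval_mul, hz0, mul_zero]
    obtain ⟨hcoef, hpdeg⟩ := polder_facts hA hAdeg hN1 hAroots hζre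
    have hP0 : polder N ζ A ≠ 0 := fun h => hcoef (by rw [h, coeff_zero])
    have hProots : ∀ w ∈ (polder N ζ A).roots, w.re ≤ c := by
      intro w hw
      by_contra hgt
      push_neg at hgt
      have hlag := laguerre hA (by rw [hAdeg]; exact hN1) hAroots hζre hgt
      rw [hAdeg] at hlag
      exact hlag ((mem_roots hP0).mp hw)
    have hIH := ih (N - 1) (by omega) (polder N ζ A) B₁ hP0 hpdeg hProots hB₁ (by omega)
      hB₁roots
    rw [pair_step N ζ A B₁ hB₁deg] at hIH
    rw [hfac]
    exact hIH
lemma pairF_value (N : ℕ) (A : Polynomial ℂ) :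
    pairF N A (C (((N : ℂ) + 1))⁻¹ * (X ^ (N + 1) - (X + C (-1)) ^ (N + 1)))
      = (N.factorial : ℂ) * ∑ k ∈ Finset.range (N + 1), A.coeff k * ((k : ℂ) + 1)⁻¹ := by
  unfold pairF
  rw [Finset.mul_sum]
  apply Finset.sum_congr rfl
  intro k hk
  simp only [Finset.mem_range] at hk
  have hk' : k ≤ N := by omega
  have hNc : ((N : ℂ) + 1) ≠ 0 := Nat.cast_add_one_ne_zero N
  have hkc : ((k : ℂ) + 1) ≠ 0 := Nat.cast_add_one_ne_zero k
  have hcoeff : (C (((N : ℂ) + 1))⁻¹ * (X ^ (N + 1) - (X + C (-1)) ^ (N + 1))).coeff (N - k)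
      = ((N : ℂ) + 1)⁻¹ * ((-1 : ℂ) ^ k * (((N + 1).choose (N - k) : ℕ) : ℂ)) := by
    rw [coeff_C_mul, coeff_sub, coeff_X_pow, if_neg (by omega), coeff_X_add_C_pow,
      show N + 1 - (N - k) = k + 1 by omega, pow_succ]
    ring
  rw [hcoeff]
  have hnat : (N + 1).choose (N - k) * (N - k).factorial * (k + 1).factorial
      = (N + 1).factorial := by
    have h := Nat.choose_mul_factorial_mul_factorial (show N - k ≤ N + 1 by omega)
    rwa [show N + 1 - (N - k) = k + 1 by omega] at h
  have hnat2 : k.factorial * (N - k).factorial * ((N + 1).choose (N - k)) * (k + 1)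
      = N.factorial * (N + 1) := by
    rw [Nat.factorial_succ k, Nat.factorial_succ N] at hnat
    linarith [hnat]
  have h11 : ((-1 : ℂ)) ^ k * ((-1 : ℂ)) ^ k = 1 := by
    rw [← pow_add, ← two_mul, pow_mul]
    norm_num
  have hfrac : ((k.factorial : ℂ) * ((N - k).factorial : ℂ)
        * (((N + 1).choose (N - k) : ℕ) : ℂ)) * ((N : ℂ) + 1)⁻¹
      = (N.factorial : ℂ) * ((k : ℂ) + 1)⁻¹ := by
    rw [inv_eq_one_div, inv_eq_one_div, mul_one_div, mul_one_div,
      div_eq_div_iff hNc hkc]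
    push_cast
    exact_mod_cast congrArg (Nat.cast : ℕ → ℂ) hnat2
  calc (-1 : ℂ) ^ k * (k.factorial : ℂ) * ((N - k).factorial : ℂ) * A.coeff k
        * (((N : ℂ) + 1)⁻¹ * ((-1 : ℂ) ^ k * (((N + 1).choose (N - k) : ℕ) : ℂ)))
      = ((-1 : ℂ) ^ k * (-1 : ℂ) ^ k) * (((k.factorial : ℂ) * ((N - k).factorial : ℂ)
          * (((N + 1).choose (N - k) : ℕ) : ℂ)) * ((N : ℂ) + 1)⁻¹) * A.coeff k := by ring
    _ = (N.factorial : ℂ) * (A.coeff k * ((k : ℂ) + 1)⁻¹) := by rw [h11, hfrac]; ring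

lemma GH (p : Polynomial ℂ) (hdeg : 2 ≤ p.natDegree) (a : ℂ) (ha : a ≠ 0)
    (h0 : eval 0 p = 0) (hae : eval a p = 0) :
    ∃ w, eval w (derivative p) = 0 ∧ Complex.normSq a ≤ 2 * (w * (starRingEnd ℂ) a).re := by
  by_contra hcon
  push_neg at hcon
  set n := p.natDegree with hn
  have hdeg' : 0 < p.natDegree := by omega
  have hdpdeg : (derivative p).natDegree = n - 1 :=
    natDegree_eq_of_degree_eq_some (degree_derivative_eq p hdeg')
  have hdp : derivative p ≠ 0 := by
    intro h
    have h2 := degree_derivative_eq p hdeg'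
    rw [h, degree_zero] at h2
    exact absurd h2 (by simp)
  set N := n - 1 with hN
  have hN1 : 1 ≤ N := by omega
  set P := p.comp (C a * X) with hP
  set A := derivative P with hA
  have hq : derivative (C a * X) = C a := by simp
  have hAeq : A = C a * ((derivative p).comp (C a * X)) := by
    rw [hA, hP, derivative_comp, hq]
  have hCa : (C a : Polynomial ℂ) ≠ 0 := by
    simpa using ha
  have hcomp0 : (derivative p).comp (C a * X) ≠ 0 := by
    intro h
    have hlc := leadingCoeff_comp (p := derivative p) (q := C a * X)
      (by rw [natDegree_C_mul_X a ha]; omega)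
    rw [h, leadingCoeff_zero] at hlc
    have h1 : (derivative p).leadingCoeff ≠ 0 := leadingCoeff_ne_zero.mpr hdp
    have h2 : (C a * X : Polynomial ℂ).leadingCoeff = a := by
      simp [leadingCoeff_C_mul_X]
    rw [h2] at hlc
    exact (mul_ne_zero h1 (pow_ne_zero _ ha)) hlc.symm
  have hA0 : A ≠ 0 := by
    rw [hAeq]; exact mul_ne_zero hCa hcomp0
  have hAdeg : A.natDegree = N := by
    rw [hAeq, natDegree_mul hCa hcomp0, natDegree_C, zero_add, natDegree_comp,
      natDegree_C_mul_X a ha, mul_one, hdpdeg]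
  have hsq : 0 < Complex.normSq a := Complex.normSq_pos.mpr ha
  have hAroots : ∀ w ∈ A.roots, w.re < 1 / 2 := by
    intro w hw
    have hev : eval w A = 0 := (mem_roots hA0).mp hw
    rw [hAeq, eval_mul, eval_C] at hev
    have hev2 : eval (a * w) (derivative p) = 0 := by
      rcases mul_eq_zero.mp hev with h | h
      · exact absurd h ha
      · rw [eval_comp, eval_mul, eval_C, eval_X] at h; exact h
    have hlt := hcon (a * w) hev2
    have hrw : (a * w) * (starRingEnd ℂ) a = w * ((Complex.normSq a : ℝ) : ℂ) := by
      rw [← Complex.mul_conj]; ring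
    rw [hrw] at hlt
    have hre : (w * ((Complex.normSq a : ℝ) : ℂ)).re = w.re * Complex.normSq a := by
      simp [Complex.mul_re]
    rw [hre] at hlt
    nlinarith
  have hAcard : Multiset.card A.roots = N :=
    hAdeg ▸ splits_iff_card_roots.mp (IsAlgClosed.splits A)
  have hroots_ne : A.roots ≠ 0 := by
    intro h
    rw [h] at hAcard
    simp at hAcard
    omega
  classical
  have hFne : (A.roots.toFinset.image Complex.re).Nonempty := by
    obtain ⟨w, hw⟩ := Multiset.exists_mem_of_ne_zero hroots_ne
    exact ⟨w.re, Finset.mem_image.mpr ⟨w, Multiset.mem_toFinset.mpr hw, rfl⟩⟩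
  set c := (A.roots.toFinset.image Complex.re).max' hFne with hc
  have hcub : ∀ w ∈ A.roots, w.re ≤ c := fun w hw =>
    Finset.le_max' _ _ (Finset.mem_image.mpr ⟨w, Multiset.mem_toFinset.mpr hw, rfl⟩)
  have hclt : c < 1 / 2 := by
    obtain ⟨w, hwmem, hwre⟩ := Finset.mem_image.mp (Finset.max'_mem _ hFne)
    have hcw : c = w.re := by rw [hc, ← hwre]
    rw [hcw]
    exact hAroots w (Multiset.mem_toFinset.mp hwmem)
  set B := C (((N : ℂ) + 1))⁻¹ * (X ^ (N + 1) - (X + C (-1)) ^ (N + 1)) with hB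
  have hNc : ((N : ℂ) + 1) ≠ 0 := Nat.cast_add_one_ne_zero N
  have hBcoeffN : B.coeff N = 1 := by
    rw [hB, coeff_C_mul, coeff_sub, coeff_X_pow, if_neg (by omega), coeff_X_add_C_pow,
      show N + 1 - N = 1 by omega, Nat.choose_succ_self_right]
    rw [pow_one]
    push_cast
    field_simp
    ring
  have hB0 : B ≠ 0 := by
    intro h
    rw [h, coeff_zero] at hBcoeffN
    exact one_ne_zero hBcoeffN.symm
  have hBdeg : B.natDegree ≤ N := by
    rw [natDegree_le_iff_coeff_eq_zero]
    intro m hm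
    rw [hB, coeff_C_mul, coeff_sub, coeff_X_add_C_pow]
    rcases eq_or_lt_of_le (show N + 1 ≤ m by omega) with h | h
    · rw [← h, coeff_X_pow, if_pos rfl, Nat.sub_self, pow_zero, Nat.choose_self]
      simp
    · rw [coeff_X_pow, if_neg (by omega), Nat.choose_eq_zero_of_lt h]
      simp
  have hBroots : ∀ z ∈ B.roots, c < z.re := by
    intro z hz
    have hev : eval z B = 0 := (mem_roots hB0).mp hz
    rw [hB, eval_mul, eval_C, eval_sub, eval_pow, eval_pow, eval_add, eval_C, eval_X] at hev
    have hev2 : z ^ (N + 1) = (z + (-1)) ^ (N + 1) := by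
      rcases mul_eq_zero.mp hev with h | h
      · exact absurd h (inv_ne_zero hNc)
      · exact sub_eq_zero.mp h
    have habs : Complex.abs z = Complex.abs (z + (-1)) := by
      have h2 := congrArg Complex.abs hev2
      rw [map_pow, map_pow] at h2
      exact (pow_left_inj₀ (AbsoluteValue.nonneg _ _) (AbsoluteValue.nonneg _ _)
        (by omega : N + 1 ≠ 0)).mp h2
    have hre : z.re = 1 / 2 := by
      have h1 : Complex.normSq z = Complex.normSq (z + (-1)) := by
        rw [← Complex.sq_abs, ← Complex.sq_abs, habs]
      simp only [Complex.normSq_apply, Complex.add_re, Complex.add_im, Complex.neg_re,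
        Complex.neg_im, Complex.one_re, Complex.one_im] at h1
      nlinarith [h1]
    linarith
  have hgr := grace c N A B hA0 hAdeg hcub hB0 hBdeg hBroots
  apply hgr
  rw [hB, pairF_value N A]
  have hterm : ∀ k, A.coeff k * ((k : ℂ) + 1)⁻¹ = P.coeff (k + 1) := by
    intro k
    have hkc : ((k : ℂ) + 1) ≠ 0 := Nat.cast_add_one_ne_zero k
    rw [hA, coeff_derivative]
    field_simp
  have hPdeg : P.natDegree = n := by
    rw [hP, natDegree_comp, natDegree_C_mul_X a ha, mul_one]
  have hP1 : eval 1 P = 0 := by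
    rw [hP, eval_comp, eval_mul, eval_C, eval_X, mul_one]
    exact hae
  have hP0' : P.coeff 0 = 0 := by
    rw [coeff_zero_eq_eval_zero, hP, eval_comp, eval_mul, eval_C, eval_X, mul_zero]
    exact h0
  have hsum0 : ∑ k ∈ Finset.range (N + 1), A.coeff k * ((k : ℂ) + 1)⁻¹ = 0 := by
    rw [Finset.sum_congr rfl (fun k _ => hterm k)]
    have he1 : eval 1 P = ∑ i ∈ Finset.range (n + 1), P.coeff i := by
      rw [eval_eq_sum_range, hPdeg]
      simp
    have hshift : ∑ i ∈ Finset.range (n + 1), P.coeff i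
        = (∑ k ∈ Finset.range n, P.coeff (k + 1)) + P.coeff 0 :=
      Finset.sum_range_succ' _ n
    have hrange : N + 1 = n := by omega
    rw [hrange]
    have : eval 1 P = (∑ k ∈ Finset.range n, P.coeff (k + 1)) + P.coeff 0 := by
      rw [he1, hshift]
    rw [hP1, hP0', add_zero] at this
    exact this.symm
  rw [hsum0, mul_zero]
lemma rstar_pos (n : ℕ) (hn : 2 ≤ n) : 0 < ((n : ℝ)⁻¹) ^ (((n : ℝ) - 1)⁻¹) := by
  have h1 : (2 : ℝ) ≤ (n : ℝ) := by exact_mod_cast hn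
  have h2 : (0 : ℝ) < (n : ℝ)⁻¹ := by
    apply inv_pos.mpr
    linarith
  exact Real.rpow_pos_of_pos h2 _

lemma rstar_pow (n : ℕ) (hn : 2 ≤ n) :
    (((n : ℝ)⁻¹) ^ (((n : ℝ) - 1)⁻¹)) ^ (n - 1) = (n : ℝ)⁻¹ := by
  have h1 : (2 : ℝ) ≤ (n : ℝ) := by exact_mod_cast hn
  have hne1 : ((n : ℝ) - 1) ≠ 0 := by linarith
  have hcast : ((n - 1 : ℕ) : ℝ) = (n : ℝ) - 1 := by
    rw [Nat.cast_sub (by omega : 1 ≤ n), Nat.cast_one]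
  rw [← Real.rpow_natCast (((n : ℝ)⁻¹) ^ (((n : ℝ) - 1)⁻¹)) (n - 1), hcast,
    ← Real.rpow_mul (by positivity), inv_mul_cancel₀ hne1, Real.rpow_one]

lemma multiset_prod_nonneg (M : Multiset ℝ) (h : ∀ x ∈ M, 0 ≤ x) : 0 ≤ M.prod := by
  induction M using Multiset.induction with
  | empty => simp
  | cons a M ih =>
    rw [Multiset.prod_cons]
    exact mul_nonneg (h a (Multiset.mem_cons_self a M))
      (ih fun x hx => h x (Multiset.mem_cons_of_mem hx))

lemma multiset_prod_le_one (M : Multiset ℝ) (h : ∀ x ∈ M, 0 ≤ x ∧ x ≤ 1) : M.prod ≤ 1 := by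
  induction M using Multiset.induction with
  | empty => simp
  | cons a M ih =>
    rw [Multiset.prod_cons]
    have ha := h a (Multiset.mem_cons_self a M)
    have ihx := ih fun x hx => h x (Multiset.mem_cons_of_mem hx)
    have hnn := multiset_prod_nonneg M fun x hx => (h x (Multiset.mem_cons_of_mem hx)).1
    nlinarith [ha.1, ha.2]

lemma multiset_pow_card_le_prod (M : Multiset ℝ) (r : ℝ) (hr : 0 ≤ r)
    (h : ∀ x ∈ M, r ≤ x) : r ^ Multiset.card M ≤ M.prod := by
  induction M using Multiset.induction with
  | empty => simp
  | cons a M ih =>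
    rw [Multiset.prod_cons, Multiset.card_cons, pow_succ]
    have ha := h a (Multiset.mem_cons_self a M)
    have ihx := ih fun x hx => h x (Multiset.mem_cons_of_mem hx)
    have hMnn : 0 ≤ M.prod :=
      multiset_prod_nonneg M fun x hx => le_trans hr (h x (Multiset.mem_cons_of_mem hx))
    calc r ^ Multiset.card M * r ≤ M.prod * a :=
          mul_le_mul ihx ha hr hMnn
      _ = a * M.prod := mul_comm _ _

lemma q0_facts (n : ℕ) (hn : 2 ≤ n) :
    (X ^ n - X : Polynomial ℂ) ∈ S0 n ∧
    pnorm0 (X ^ n - X : Polynomial ℂ) = ((n : ℝ)⁻¹) ^ (((n : ℝ) - 1)⁻¹) := by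
  have hn2R : (2 : ℝ) ≤ (n : ℝ) := by exact_mod_cast hn
  have hne1 : ((n : ℝ) - 1) ≠ 0 := by linarith
  have hnpos : (0 : ℝ) < (n : ℝ) := by linarith
  set rstar : ℝ := ((n : ℝ)⁻¹) ^ (((n : ℝ) - 1)⁻¹) with hrstar
  have hrpos : 0 < rstar := rstar_pos n hn
  have hrpow : rstar ^ (n - 1) = (n : ℝ)⁻¹ := rstar_pow n hn
  have hmem : (X ^ n - X : Polynomial ℂ) ∈ S0 n := by
    have hdegX : (X : Polynomial ℂ).degree < ((X : Polynomial ℂ) ^ n).degree := by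
      rw [degree_X_pow, degree_X]
      exact_mod_cast (by omega : 1 < n)
    have hdeg : (X ^ n - X : Polynomial ℂ).degree = n := by
      rw [degree_sub_eq_left_of_degree_lt hdegX, degree_X_pow]
    refine ⟨?_, ?_, ?_, ?_⟩
    · exact monic_X_pow_sub (by rw [degree_X]; exact_mod_cast (by omega : 1 < n))
    · exact natDegree_eq_of_degree_eq_some hdeg
    · intro z hz
      rw [eval_sub, eval_pow, eval_X, sub_eq_zero] at hz
      have habs : Complex.abs z ^ n = Complex.abs z := by
        rw [← map_pow, hz]
      by_contra hgt
      push_neg at hgt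
      have h2 : Complex.abs z ^ 2 ≤ Complex.abs z ^ n := pow_le_pow_right₀ hgt.le hn
      simp only [Complex.abs_eq_norm] at habs h2
      nlinarith
    · simp [zero_pow (show n ≠ 0 by omega)]
  refine ⟨hmem, ?_⟩
  have hder : derivative (X ^ n - X : Polynomial ℂ) = C (n : ℂ) * X ^ (n - 1) - 1 := by
    rw [derivative_sub, derivative_X_pow, derivative_X]
  have hset : {w : ℂ | (derivative (X ^ n - X : Polynomial ℂ)).eval w = 0}
      = {w : ℂ | (n : ℂ) * w ^ (n - 1) = 1} := by
    ext w
    rw [Set.mem_setOf_eq, Set.mem_setOf_eq, hder]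
    rw [eval_sub, eval_mul, eval_C, eval_pow, eval_X, eval_one, sub_eq_zero]
  have hnC : ((n : ℂ)) ≠ 0 := by
    simp only [ne_eq, Nat.cast_eq_zero]; omega
  have himg : Complex.abs '' {w : ℂ | (n : ℂ) * w ^ (n - 1) = 1} = {rstar} := by
    ext x
    simp only [Set.mem_image, Set.mem_setOf_eq, Set.mem_singleton_iff]
    constructor
    · rintro ⟨w, hw, rfl⟩
      have h1 : (n : ℝ) * Complex.abs w ^ (n - 1) = 1 := by
        have h2 := congrArg Complex.abs hw
        rwa [map_mul, map_pow, Complex.abs_natCast, map_one] at h2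
      have h2 : Complex.abs w ^ (n - 1) = (n : ℝ)⁻¹ := by
        field_simp
        linarith
      exact (pow_left_inj₀ (AbsoluteValue.nonneg _ _) hrpos.le
        (show n - 1 ≠ 0 by omega)).mp (by rw [h2, hrpow])
    · rintro rfl
      refine ⟨(rstar : ℂ), ?_, ?_⟩
      · have h1 : ((rstar : ℂ)) ^ (n - 1) = ((n : ℂ))⁻¹ := by
          rw [← Complex.ofReal_pow, hrpow]
          simp
        rw [h1, mul_inv_cancel₀ hnC]
      · rw [Complex.abs_ofReal, abs_of_pos hrpos]
  show sInf (Complex.abs '' {w : ℂ | (derivative (X ^ n - X : Polynomial ℂ)).eval w = 0}) = rstar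
  rw [hset, himg, csInf_singleton]

end ZeroMaxAux
end

/-- Every 0-maximal polynomial `p` of degree `n ≥ 2` satisfies `d(p) = |p|_0`. -/
theorem dfun_eq_pnorm0_of_zero_maximal (n : ℕ) (hn : 2 ≤ n)
    (p : Polynomial ℂ) (hp : p ∈ S0 n)
    (hmax : ∀ q ∈ S0 n, pnorm0 q ≤ pnorm0 p) :
    dfun p = pnorm0 p := by
  classical
  obtain ⟨hmonic, hdegn, hdisk, h0⟩ := hp
  obtain ⟨hq0mem, hq0val⟩ := ZeroMaxAux.q0_facts n hn
  set rstar : ℝ := ((n : ℝ)⁻¹) ^ (((n : ℝ) - 1)⁻¹) with hrstar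
  have hrspos : 0 < rstar := ZeroMaxAux.rstar_pos n hn
  have hrspow : rstar ^ (n - 1) = (n : ℝ)⁻¹ := ZeroMaxAux.rstar_pow n hn
  have hn2R : (2 : ℝ) ≤ (n : ℝ) := by exact_mod_cast hn
  set dp := derivative p with hdp
  have hdeg' : 0 < p.natDegree := by rw [hdegn]; omega
  have hdpdeg : dp.natDegree = n - 1 := by
    rw [hdp]
    have h1 := natDegree_eq_of_degree_eq_some (degree_derivative_eq p hdeg')
    rw [h1, hdegn]
  have hdp0 : dp ≠ 0 := by
    intro h
    have h2 := degree_derivative_eq p hdeg'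
    rw [hdp] at h
    rw [h, degree_zero] at h2
    exact absurd h2 (by simp)
  have hKsub : {w : ℂ | dp.eval w = 0} ⊆ ↑dp.roots.toFinset := by
    intro w hw
    exact Finset.mem_coe.mpr (Multiset.mem_toFinset.mpr ((mem_roots hdp0).mpr hw))
  have hKfin : {w : ℂ | dp.eval w = 0}.Finite :=
    Set.Finite.subset dp.roots.toFinset.finite_toSet hKsub
  have hKimfin : (Complex.abs '' {w : ℂ | dp.eval w = 0}).Finite := hKfin.image _
  have hcard : Multiset.card dp.roots = n - 1 := by
    rw [← hdpdeg]
    exact splits_iff_card_roots.mp (IsAlgClosed.splits dp)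
  have hrootsne : dp.roots ≠ 0 := by
    intro h
    rw [h] at hcard
    simp at hcard
    omega
  obtain ⟨w₁, hw₁⟩ := Multiset.exists_mem_of_ne_zero hrootsne
  have hKne : (Complex.abs '' {w : ℂ | dp.eval w = 0}).Nonempty :=
    ⟨Complex.abs w₁, ⟨w₁, (mem_roots hdp0).mp hw₁, rfl⟩⟩
  have hpn : pnorm0 p = sInf (Complex.abs '' {w : ℂ | dp.eval w = 0}) := rfl
  have hbdd : BddBelow (Complex.abs '' {w : ℂ | dp.eval w = 0}) := by
    refine ⟨0, ?_⟩
    rintro x ⟨w, _, rfl⟩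
    exact AbsoluteValue.nonneg _ _
  have hrmem : (pnorm0 p) ∈ Complex.abs '' {w : ℂ | dp.eval w = 0} := by
    rw [hpn]
    exact Set.Nonempty.csInf_mem hKne hKimfin
  have hlb : ∀ w : ℂ, dp.eval w = 0 → (pnorm0 p) ≤ Complex.abs w := by
    intro w hw
    rw [hpn]
    exact csInf_le hbdd ⟨w, hw, rfl⟩
  have hrstar_le : rstar ≤ (pnorm0 p) := by
    have := hmax _ hq0mem
    rw [hq0val] at this
    exact this
  have hrpos' : 0 < (pnorm0 p) := lt_of_lt_of_le hrspos hrstar_le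
  -- leading coefficient of dp
  have hlcdp : dp.leadingCoeff = (n : ℂ) := by
    have h1 : dp.leadingCoeff = dp.coeff (n - 1) := by rw [← hdpdeg, coeff_natDegree]
    rw [h1, hdp, coeff_derivative]
    have h2 : (n - 1) + 1 = n := by omega
    rw [h2]
    have h3 : p.coeff n = 1 := by rw [← hdegn]; exact hmonic.coeff_natDegree
    rw [h3, one_mul, Nat.cast_sub (by omega : 1 ≤ n)]
    push_cast
    ring
  have hsplit : dp = C dp.leadingCoeff * (dp.roots.map fun w => X - C w).prod :=
    (IsAlgClosed.splits dp).eq_prod_roots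
  have hev0 : Complex.abs (dp.eval 0) = (n : ℝ) * ((dp.roots.map Complex.abs).prod) := by
    have h1 : dp.eval 0 = (n : ℂ) * (dp.roots.map fun w => -w).prod := by
      conv_lhs => rw [hsplit]
      rw [eval_mul, eval_C, hlcdp, eval_multiset_prod, Multiset.map_map]
      congr 1
      exact congrArg Multiset.prod (Multiset.map_congr rfl (fun w _ => by simp))
    rw [h1, map_mul, Complex.abs_natCast, map_multiset_prod, Multiset.map_map]
    congr 1
    exact congrArg Multiset.prod (Multiset.map_congr rfl (fun w _ => by simp))
  have hub1 : Complex.abs (dp.eval 0) ≤ 1 := by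
    obtain ⟨g, hg⟩ : (X : Polynomial ℂ) ∣ p :=
      X_dvd_iff.mpr (by rw [coeff_zero_eq_eval_zero]; exact h0)
    have hp0 : p ≠ 0 := hmonic.ne_zero
    have hgne : g ≠ 0 := by rintro rfl; rw [mul_zero] at hg; exact hp0 hg
    have hevg : dp.eval 0 = g.eval 0 := by
      rw [hdp, hg, derivative_mul, derivative_X, one_mul]
      simp
    have hglc : g.leadingCoeff = 1 := by
      have hm1 : p.leadingCoeff = 1 := hmonic
      rw [hg, leadingCoeff_mul, leadingCoeff_X, one_mul] at hm1
      exact hm1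
    have hgsplit : g = C g.leadingCoeff * (g.roots.map fun w => X - C w).prod :=
      (IsAlgClosed.splits g).eq_prod_roots
    have h2 : g.eval 0 = (g.roots.map fun w => -w).prod := by
      conv_lhs => rw [hgsplit]
      rw [eval_mul, eval_C, hglc, one_mul, eval_multiset_prod, Multiset.map_map]
      exact congrArg Multiset.prod (Multiset.map_congr rfl (fun w _ => by simp))
    rw [hevg, h2, map_multiset_prod, Multiset.map_map]
    have h3 : Multiset.map (⇑Complex.abs ∘ fun w => -w) g.roots
        = Multiset.map Complex.abs g.roots :=
      Multiset.map_congr rfl (fun w _ => by simp)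
    rw [h3]
    apply ZeroMaxAux.multiset_prod_le_one
    intro x hx
    obtain ⟨w, hwmem, rfl⟩ := Multiset.mem_map.mp hx
    refine ⟨AbsoluteValue.nonneg _ _, ?_⟩
    exact hdisk w (by rw [hg, eval_mul, eval_X, (mem_roots hgne).mp hwmem, mul_zero])
  -- products
  have hprod_le : (dp.roots.map Complex.abs).prod ≤ (n : ℝ)⁻¹ := by
    have h1 : (n : ℝ) * (dp.roots.map Complex.abs).prod ≤ 1 := by
      rw [← hev0]; exact hub1
    have hn0 : (0 : ℝ) < n := by linarith
    rw [inv_eq_one_div, le_div_iff₀ hn0]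
    nlinarith
  have hprod_ge : (pnorm0 p) ^ (n - 1) ≤ (dp.roots.map Complex.abs).prod := by
    have h1 := ZeroMaxAux.multiset_pow_card_le_prod (dp.roots.map Complex.abs) (pnorm0 p) hrpos'.le ?_
    · rwa [Multiset.card_map, hcard] at h1
    · intro x hx
      obtain ⟨w, hwmem, rfl⟩ := Multiset.mem_map.mp hx
      exact hlb w ((mem_roots hdp0).mp hwmem)
  have h5 : rstar ^ (n - 1) ≤ (pnorm0 p) ^ (n - 1) := pow_le_pow_left₀ hrspos.le hrstar_le _
  have heq1 : (dp.roots.map Complex.abs).prod = (pnorm0 p) ^ (n - 1) := by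
    refine le_antisymm ?_ hprod_ge
    calc (dp.roots.map Complex.abs).prod ≤ (n : ℝ)⁻¹ := hprod_le
      _ = rstar ^ (n - 1) := hrspow.symm
      _ ≤ (pnorm0 p) ^ (n - 1) := h5
  -- all critical moduli equal (pnorm0 p)
  have hcritabs : ∀ w : ℂ, dp.eval w = 0 → Complex.abs w = (pnorm0 p) := by
    intro w hw
    have hwmem : w ∈ dp.roots := (mem_roots hdp0).mpr hw
    obtain ⟨M', hM'⟩ := Multiset.exists_cons_of_mem hwmem
    have hMabs' : dp.roots.map Complex.abs = Complex.abs w ::ₘ (M'.map Complex.abs) := by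
      rw [hM', Multiset.map_cons]
    have hcard' : Multiset.card M' = n - 2 := by
      have h6 := hcard
      rw [hM', Multiset.card_cons] at h6
      omega
    have hge : (pnorm0 p) ^ (n - 2) ≤ (M'.map Complex.abs).prod := by
      have h7 := ZeroMaxAux.multiset_pow_card_le_prod (M'.map Complex.abs) (pnorm0 p) hrpos'.le ?_
      · rwa [Multiset.card_map, hcard'] at h7
      · intro x hx
        obtain ⟨u, humem, rfl⟩ := Multiset.mem_map.mp hx
        have humem' : u ∈ dp.roots := by rw [hM']; exact Multiset.mem_cons_of_mem humem
        exact hlb u ((mem_roots hdp0).mp humem')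
    have hle : Complex.abs w ≤ (pnorm0 p) := by
      have h6 : Complex.abs w * ((pnorm0 p) ^ (n - 2))
          ≤ Complex.abs w * (M'.map Complex.abs).prod :=
        mul_le_mul_of_nonneg_left hge (AbsoluteValue.nonneg _ _)
      have h7 : Complex.abs w * (M'.map Complex.abs).prod = (pnorm0 p) ^ (n - 1) := by
        rw [← Multiset.prod_cons, ← hMabs', heq1]
      have h8 : (pnorm0 p) ^ (n - 1) = (pnorm0 p) * (pnorm0 p) ^ (n - 2) := by
        rw [show n - 1 = (n - 2) + 1 by omega, pow_succ']
      have h9 : (0 : ℝ) < (pnorm0 p) ^ (n - 2) := pow_pos hrpos' _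
      nlinarith
    exact le_antisymm hle (hlb w hw)
  -- conclusion
  unfold dfun
  rw [← hdp]
  apply IsGreatest.csSup_eq
  have hval0 : sInf ((fun w => Complex.abs (0 - w)) '' {w : ℂ | dp.eval w = 0}) = (pnorm0 p) := by
    have him : (fun w => Complex.abs (0 - w)) '' {w : ℂ | dp.eval w = 0}
        = Complex.abs '' {w : ℂ | dp.eval w = 0} :=
      Set.image_congr (fun w _ => by rw [zero_sub]; simp)
    rw [him, ← hpn]
  constructor
  · exact ⟨0, h0, hval0⟩
  · rintro x ⟨z, hzmem, rfl⟩
    simp only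
    have hbdd2 : BddBelow ((fun w => Complex.abs (z - w)) '' {w : ℂ | dp.eval w = 0}) := by
      refine ⟨0, ?_⟩
      rintro y ⟨w, _, rfl⟩
      exact AbsoluteValue.nonneg _ _
    by_cases hz : z = 0
    · subst hz
      exact hval0.le
    · have hzval : p.eval z = 0 := hzmem
      obtain ⟨w, hwcrit, hwre⟩ := ZeroMaxAux.GH p (by rw [hdegn]; exact hn) z hz h0 hzval
      have hwcrit' : dp.eval w = 0 := by rw [hdp]; exact hwcrit
      have hdist : Complex.abs (z - w) ≤ Complex.abs w := by
        have h1 : Complex.normSq (z - w) ≤ Complex.normSq w := by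
          have h2 : (w * (starRingEnd ℂ) z).re = w.re * z.re + w.im * z.im := by
            simp [Complex.mul_re]
          rw [h2] at hwre
          simp only [Complex.normSq_apply, Complex.sub_re, Complex.sub_im] at *
          nlinarith
        rw [Complex.abs_apply, Complex.abs_apply]
        exact Real.sqrt_le_sqrt h1
      rw [hcritabs w hwcrit'] at hdist
      exact csInf_le_of_le hbdd2 ⟨w, hwcrit', rfl⟩ hdist
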